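/- Let 1 ≤ j < n and let S_{j+1} be obtained from an L_j^- PTS by adding a horizontal edge configuration between aisles j and j+1. If the degrees of a_j and b_j in S_{j+1} are odd, then 1pass is the only vertical edge configuration in aisle j that can be valid for S_{j+1}. If instead the degrees of a_j and b_j in S_{j+1} are both even (possibly zero), then 1pass is not valid for S_{j+1}. -/

import Mathlib

/-- Degree parity class of a vertex: degree zero, odd degree, or even positive degree. -/
inductive DegClass : Type
  | zero : DegClass
  | odd : DegClass
  | evenPos : DegClass
deriving DecidableEq

/-- The parity class of a natural number (a degree). -/
def degClass (d : ℕ) : DegClass :=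
  if d = 0 then .zero else if d % 2 = 1 then .odd else .evenPos

/-- Names of the six vertical edge configurations. -/
inductive VCName : Type
  | onepass : VCName
  | top : VCName
  | bottom : VCName
  | gap : VCName
  | twopass : VCName
  | none : VCName
deriving DecidableEq

/-- Names of the five horizontal edge configurations. -/
inductive HCName : Type
  | h11 : HCName
  | h20 : HCName
  | h02 : HCName
  | h22 : HCName
  | h00 : HCName
deriving DecidableEq

/-- Number of copies of the back cross-aisle edge `a_j a_{j+1}` in a horizontal configuration. -/
def hcA : HCName → ℕ
  | .h11 => 1
  | .h20 => 2
  | .h02 => 0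
  | .h22 => 2
  | .h00 => 0

/-- Number of copies of the front cross-aisle edge `b_j b_{j+1}` in a horizontal configuration. -/
def hcB : HCName → ℕ
  | .h11 => 1
  | .h20 => 0
  | .h02 => 2
  | .h22 => 2
  | .h00 => 0

/-- The seven equivalence classes, as triples (parity of `a_j`, parity of `b_j`, #components). -/
def cUU1C : DegClass × DegClass × ℕ := (.odd, .odd, 1)
def c0E1C : DegClass × DegClass × ℕ := (.zero, .evenPos, 1)
def cE01C : DegClass × DegClass × ℕ := (.evenPos, .zero, 1)
def cEE1C : DegClass × DegClass × ℕ := (.evenPos, .evenPos, 1)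
def cEE2C : DegClass × DegClass × ℕ := (.evenPos, .evenPos, 2)
def c000C : DegClass × DegClass × ℕ := (.zero, .zero, 0)
def c001C : DegClass × DegClass × ℕ := (.zero, .zero, 1)

/-- A single-block parallel-aisle warehouse in the sense of Ratliff and Rosenthal:
`n ≥ 1` vertical pick aisles, two horizontal cross-aisles, `picks j` pick vertices
strictly inside aisle `j`, nonnegative edge lengths, and a depot located at some
cross-aisle vertex `a_j` (if `depotTop`) or `b_j`. -/
structure Warehouse where
  n : ℕ
  npos : 1 ≤ n
  picks : Fin n → ℕ
  vlen : (j : Fin n) → Fin (picks j + 1) → ℝ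
  hlenA : Fin (n - 1) → ℝ
  hlenB : Fin (n - 1) → ℝ
  vlen_nonneg : ∀ j i, 0 ≤ vlen j i
  hlenA_nonneg : ∀ k, 0 ≤ hlenA k
  hlenB_nonneg : ∀ k, 0 ≤ hlenB k
  depotAisle : Fin n
  depotTop : Bool

namespace Warehouse

variable (W : Warehouse)

/-- Vertices of the warehouse graph: in aisle `j`, position `0` is the back cross-aisle
vertex `a_j`, position `picks j + 1` is the front cross-aisle vertex `b_j`, and
positions `1, …, picks j` are the pick vertices of aisle `j`. -/
def V : Type := Σ j : Fin W.n, Fin (W.picks j + 2)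

instance : DecidableEq W.V :=
  inferInstanceAs (DecidableEq (Σ j : Fin W.n, Fin (W.picks j + 2)))

instance : Fintype W.V :=
  inferInstanceAs (Fintype (Σ j : Fin W.n, Fin (W.picks j + 2)))

/-- The back cross-aisle vertex `a_j`. -/
def aV (j : Fin W.n) : W.V := ⟨j, 0⟩

/-- The front cross-aisle vertex `b_j`. -/
def bV (j : Fin W.n) : W.V := ⟨j, Fin.last (W.picks j + 1)⟩

/-- The depot vertex `v₀`. -/
def depot : W.V := if W.depotTop then W.aV W.depotAisle else W.bV W.depotAisle

/-- `v` is a pick vertex, i.e. a vertex strictly inside an aisle. -/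
def IsPick (v : W.V) : Prop := 0 < v.2.val ∧ v.2.val < W.picks v.1 + 1

/-- `v` is a required vertex, i.e. a member of `P` (a pick vertex or the depot). -/
def Required (v : W.V) : Prop := W.IsPick v ∨ v = W.depot

/-- Edges of the warehouse graph: a vertical edge `⟨j, i⟩` joins positions `i` and
`i+1` of aisle `j`; horizontal edges `inr (inl k)` join `a_k a_{k+1}` and
`inr (inr k)` join `b_k b_{k+1}`. -/
def E : Type := (Σ j : Fin W.n, Fin (W.picks j + 1)) ⊕ (Fin (W.n - 1) ⊕ Fin (W.n - 1))

instance : DecidableEq W.E :=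
  inferInstanceAs (DecidableEq ((Σ j : Fin W.n, Fin (W.picks j + 1)) ⊕ (Fin (W.n - 1) ⊕ Fin (W.n - 1))))

instance : Fintype W.E :=
  inferInstanceAs (Fintype ((Σ j : Fin W.n, Fin (W.picks j + 1)) ⊕ (Fin (W.n - 1) ⊕ Fin (W.n - 1))))

/-- The left aisle of a horizontal edge index. -/
def leftAisle (k : Fin (W.n - 1)) : Fin W.n := ⟨k.val, by have := k.isLt; omega⟩

/-- The right aisle of a horizontal edge index. -/
def rightAisle (k : Fin (W.n - 1)) : Fin W.n := ⟨k.val + 1, by have := k.isLt; omega⟩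

/-- Endpoints of an edge. -/
def ends : W.E → W.V × W.V
  | .inl ⟨j, i⟩ => (⟨j, i.castSucc⟩, ⟨j, i.succ⟩)
  | .inr (.inl k) => (W.aV (W.leftAisle k), W.aV (W.rightAisle k))
  | .inr (.inr k) => (W.bV (W.leftAisle k), W.bV (W.rightAisle k))

/-- Length of an edge. -/
def elen : W.E → ℝ
  | .inl ⟨j, i⟩ => W.vlen j i
  | .inr (.inl k) => W.hlenA k
  | .inr (.inr k) => W.hlenB k

/-- A subgraph of `G` is a multiplicity function taking each edge with multiplicity at most 2. -/
def IsSub (T : W.E → ℕ) : Prop := ∀ e, T e ≤ 2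

/-- Degree of a vertex in a subgraph, counting edges with multiplicity. -/
def deg (T : W.E → ℕ) (v : W.V) : ℕ :=
  ∑ e : W.E, T e * ((if (W.ends e).1 = v then 1 else 0) + (if (W.ends e).2 = v then 1 else 0))

/-- Total length of a subgraph, counting edges with multiplicity. -/
def length (T : W.E → ℕ) : ℝ := ∑ e : W.E, (T e : ℝ) * W.elen e

/-- Source of a directed traversal step. -/
def stepSrc (s : W.E × Bool) : W.V := if s.2 then (W.ends s.1).1 else (W.ends s.1).2

/-- Destination of a directed traversal step. -/
def stepDst (s : W.E × Bool) : W.V := if s.2 then (W.ends s.1).2 else (W.ends s.1).1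

/-- A list of directed steps is a closed walk. -/
def IsClosedWalk (l : List (W.E × Bool)) : Prop :=
  l.Chain' (fun s t => W.stepDst s = W.stepSrc t) ∧
  ∀ s ∈ l.head?, ∀ t ∈ l.getLast?, W.stepDst t = W.stepSrc s

/-- `T` is a tour subgraph: every required vertex has positive degree and there is a
closed walk traversing every edge of `T`, counted with multiplicity, exactly once. -/
def IsTour (T : W.E → ℕ) : Prop :=
  W.IsSub T ∧ (∀ v, W.Required v → 0 < W.deg T v) ∧
  ∃ l : List (W.E × Bool), W.IsClosedWalk l ∧ ∀ e : W.E, (l.map Prod.fst).count e = T e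

/-- `T` is an `L` partial tour subgraph: `T` is a subgraph supported on `L` and there is a
subgraph `C` of `G − L` such that `T ∪ C` is a tour subgraph of `G`. -/
def IsPTS (L : Set W.E) (T : W.E → ℕ) : Prop :=
  W.IsSub T ∧ (∀ e ∉ L, T e = 0) ∧
  ∃ C : W.E → ℕ, W.IsSub C ∧ (∀ e ∈ L, C e = 0) ∧ W.IsTour (fun e => T e + C e)

/-- Two `L` PTSs are equivalent: any completion of one is a completion of the other. -/
def EquivPTS (L : Set W.E) (T₁ T₂ : W.E → ℕ) : Prop :=
  ∀ C : W.E → ℕ, W.IsSub C → (∀ e ∈ L, C e = 0) →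
    (W.IsTour (fun e => T₁ e + C e) ↔ W.IsTour (fun e => T₂ e + C e))

/-- The edge set containing the vertical edges of the (0-indexed) aisles `< vmax` and the
horizontal edges with (0-indexed) index `< hmax`.  Thus, in paper (1-indexed) notation,
`L_j = edgesUpTo j (j-1)`, `L_j^- = edgesUpTo (j-1) (j-1)` and `G = edgesUpTo n (n-1)`. -/
def edgesUpTo (vmax hmax : ℕ) : Set W.E := fun e =>
  match e with
  | .inl ⟨i, _⟩ => i.val < vmax
  | .inr (.inl k) => k.val < hmax
  | .inr (.inr k) => k.val < hmax

/-- The simple graph on the vertices of `G` induced by the edges of positive multiplicity. -/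
def sgraph (T : W.E → ℕ) : SimpleGraph W.V where
  Adj v w := v ≠ w ∧ ∃ e, 0 < T e ∧
    (((W.ends e).1 = v ∧ (W.ends e).2 = w) ∨ ((W.ends e).1 = w ∧ (W.ends e).2 = v))
  symm := by
    constructor
    intro v w hvw
    obtain ⟨hne, e, he, hor⟩ := hvw
    exact ⟨hne.symm, e, he, hor.symm⟩
  loopless := by constructor; intro v h; exact h.1 rfl

/-- Number of connected components of a subgraph after deleting all vertices of degree zero. -/
noncomputable def numComp (T : W.E → ℕ) : ℕ :=
  Nat.card ((W.sgraph T).induce {v : W.V | 0 < W.deg T v}).ConnectedComponent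

/-- `v` and `w` both have positive degree but lie in different connected components of `T`. -/
def SepComp (T : W.E → ℕ) (v w : W.V) : Prop :=
  0 < W.deg T v ∧ 0 < W.deg T w ∧ ¬ (W.sgraph T).Reachable v w

/-- The equivalence class of a subgraph relative to the cross-aisle vertices of aisle `j`:
the degree parities of `a_j` and `b_j` and the number of nonempty connected components. -/
noncomputable def classOf (T : W.E → ℕ) (j : Fin W.n) : DegClass × DegClass × ℕ :=
  (degClass (W.deg T (W.aV j)), degClass (W.deg T (W.bV j)), W.numComp T)

theorem exists_gapIdx (j : Fin W.n) :
    ∃ g : Fin (W.picks j + 1), ∀ i, W.vlen j i ≤ W.vlen j g := by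
  obtain ⟨g, -, hg⟩ :=
    Finset.exists_max_image (Finset.univ : Finset (Fin (W.picks j + 1))) (W.vlen j)
      ⟨0, Finset.mem_univ 0⟩
  exact ⟨g, fun i => hg i (Finset.mem_univ i)⟩

/-- The vertical edge of aisle `j` of maximum length: the edge omitted by the `gap`
configuration (which leaves the largest section of the aisle unconnected). -/
noncomputable def gapIdx (j : Fin W.n) : Fin (W.picks j + 1) := (W.exists_gapIdx j).choose

theorem gapIdx_spec (j : Fin W.n) : ∀ i, W.vlen j i ≤ W.vlen j (W.gapIdx j) :=
  (W.exists_gapIdx j).choose_spec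

/-- The multiplicity of the `i`-th vertical edge of aisle `j` in each of the six vertical
edge configurations. -/
noncomputable def vconfFun (j : Fin W.n) (c : VCName) (i : Fin (W.picks j + 1)) : ℕ :=
  match c with
  | .onepass => 1
  | .top => if i.val < W.picks j then 2 else 0
  | .bottom => if 1 ≤ i.val then 2 else 0
  | .gap => if i = W.gapIdx j then 0 else 2
  | .twopass => 2
  | .none => 0

/-- A vertical edge configuration in aisle `j`, as a subgraph of `G`. -/
noncomputable def vcSub (j : Fin W.n) (c : VCName) : W.E → ℕ := fun e =>
  match e with
  | .inl ⟨i, x⟩ =>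
      if h : i = j then W.vconfFun j c ⟨x.val, by exact h ▸ x.isLt⟩ else 0
  | .inr _ => 0

/-- A horizontal edge configuration between aisles `k` and `k+1`, as a subgraph of `G`. -/
def hcSub (k : Fin (W.n - 1)) (c : HCName) : W.E → ℕ := fun e =>
  match e with
  | .inl _ => 0
  | .inr (.inl k') => if k' = k then hcA c else 0
  | .inr (.inr k') => if k' = k then hcB c else 0

end Warehouse


section Aux

lemma myCountSum {α : Type*} [Fintype α] [DecidableEq α] (L : List α) (f : α → ℕ) :
    ∑ e, (L.count e) * f e = (L.map f).sum := by
  induction L with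
  | nil => simp
  | cons a L ih =>
    have hterm : ∀ e, ((a :: L).count e) * f e
        = (L.count e) * f e + (if e = a then f e else 0) := by
      intro e
      rw [List.count_cons, add_mul]
      congr 1
      by_cases hea : e = a
      · simp [hea]
      · simp [hea, Ne.symm hea]
    simp only [hterm, Finset.sum_add_distrib, ih, Finset.sum_ite_eq', Finset.mem_univ,
      if_true, List.map_cons, List.sum_cons]
    omega

lemma mySumInd {α β : Type*} [DecidableEq β] (L : List α) (p : α → β) (v : β) :
    (L.map (fun x => if p x = v then 1 else 0)).sum = (L.map p).count v := by
  induction L with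
  | nil => simp
  | cons a L ih =>
    simp only [List.map_cons, List.sum_cons, List.count_cons, ih, beq_iff_eq]
    by_cases hp : p a = v
    · simp [hp]; omega
    · simp [hp, Ne.symm hp]

lemma mySumAdd {α : Type*} (L : List α) (f g : α → ℕ) :
    (L.map fun x => f x + g x).sum = (L.map f).sum + (L.map g).sum := by
  induction L with
  | nil => simp
  | cons a L ih => simp [ih]; omega

lemma myMapDst (W : Warehouse) :
    ∀ (t : List (W.E × Bool)) (a : W.E × Bool),
      List.Chain' (fun s u => W.stepDst s = W.stepSrc u) (a :: t) →
      (a :: t).map W.stepDst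
        = (t.map W.stepSrc) ++ [W.stepDst ((a :: t).getLast (by simp))] := by
  intro t
  induction t with
  | nil => intro a _; simp
  | cons b t ih =>
    intro a hch
    replace hch := List.isChain_cons_cons.mp hch
    have h2 := ih b hch.2
    simp only [List.map_cons] at h2 ⊢
    rw [h2, hch.1]
    simp [List.getLast_cons]

lemma myPerm (W : Warehouse) (l : List (W.E × Bool)) (hl : W.IsClosedWalk l) :
    (l.map W.stepDst).Perm (l.map W.stepSrc) := by
  cases l with
  | nil => simp
  | cons a t =>
    obtain ⟨hchain, hclose⟩ := hl
    have hlast : W.stepDst ((a :: t).getLast (by simp)) = W.stepSrc a := by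
      apply hclose a (by simp)
      simp [List.getLast?_eq_getLast]
    rw [myMapDst W t a hchain, hlast]
    exact (List.perm_append_singleton _ _).trans (by simp)

lemma myDegAdd (W : Warehouse) (A B : W.E → ℕ) (v : W.V) :
    W.deg (fun e => A e + B e) v = W.deg A v + W.deg B v := by
  unfold Warehouse.deg
  rw [← Finset.sum_add_distrib]
  exact Finset.sum_congr rfl (fun e _ => by ring)

lemma myTourEven (W : Warehouse) (T : W.E → ℕ) (hT : W.IsTour T) (v : W.V) :
    Even (W.deg T v) := by
  obtain ⟨-, -, l, hl, hcount⟩ := hT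
  unfold Warehouse.deg
  have h1 : ∀ e, T e = (l.map Prod.fst).count e := fun e => (hcount e).symm
  simp only [h1]
  rw [myCountSum, List.map_map]
  have h2 : ∀ s : W.E × Bool,
      ((fun e => ((if (W.ends e).1 = v then 1 else 0) + (if (W.ends e).2 = v then 1 else 0)))
        ∘ Prod.fst) s
      = (if W.stepSrc s = v then 1 else 0) + (if W.stepDst s = v then 1 else 0) := by
    intro ⟨e, b⟩
    cases b <;> simp [Warehouse.stepSrc, Warehouse.stepDst] <;> omega
  rw [funext h2, mySumAdd, mySumInd, mySumInd,
    (myPerm W l hl).count_eq]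
  exact ⟨(l.map W.stepSrc).count v, by ring⟩

lemma myEndsNotA (W : Warehouse) (j : Fin W.n) (e : W.E)
    (he : e ∉ W.edgesUpTo (j.val + 1) (j.val + 1)) :
    (W.ends e).1 ≠ W.aV j ∧ (W.ends e).2 ≠ W.aV j := by
  have key : ∀ (x y : Fin W.n) (u : Fin (W.picks x + 2)) (w : Fin (W.picks y + 2)),
      (⟨x, u⟩ : W.V) = ⟨y, w⟩ → x = y := by
    intro x y u w hxy
    exact congrArg Sigma.fst hxy
  match e with
  | .inl ⟨j', i⟩ =>
    have hj' : ¬ j'.val < j.val + 1 := he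
    constructor <;> intro hc <;> exact hj' (by rw [key _ _ _ _ hc]; omega)
  | .inr (.inl k) =>
    have hk : ¬ k.val < j.val + 1 := he
    constructor <;> intro hc <;>
      · have := congrArg Fin.val (key _ _ _ _ hc)
        simp [Warehouse.leftAisle, Warehouse.rightAisle] at this
        omega
  | .inr (.inr k) =>
    have hk : ¬ k.val < j.val + 1 := he
    constructor <;> intro hc <;>
      · have := congrArg Fin.val (key _ _ _ _ hc)
        simp [Warehouse.leftAisle, Warehouse.rightAisle] at this
        omega

lemma myDegOutside (W : Warehouse) (j : Fin W.n) (C : W.E → ℕ)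
    (hC : ∀ e ∈ W.edgesUpTo (j.val + 1) (j.val + 1), C e = 0) :
    W.deg C (W.aV j) = 0 := by
  unfold Warehouse.deg
  apply Finset.sum_eq_zero
  intro e _
  by_cases hL : e ∈ W.edgesUpTo (j.val + 1) (j.val + 1)
  · rw [hC e hL]; ring
  · obtain ⟨h1, h2⟩ := myEndsNotA W j e hL
    simp [h1, h2]

lemma myPtsEven (W : Warehouse) (j : Fin W.n) (T : W.E → ℕ)
    (hT : W.IsPTS (W.edgesUpTo (j.val + 1) (j.val + 1)) T) :
    Even (W.deg T (W.aV j)) := by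
  obtain ⟨-, -, C, -, hC0, htour⟩ := hT
  have he := myTourEven W _ htour (W.aV j)
  rw [myDegAdd, myDegOutside W j C hC0, add_zero] at he
  exact he

lemma myDegEvenOfEven (W : Warehouse) (T : W.E → ℕ) (hev : ∀ e, Even (T e)) (v : W.V) :
    Even (W.deg T v) := by
  unfold Warehouse.deg
  apply Finset.even_sum
  intro e _
  exact (hev e).mul_right _

lemma vconf_top (W : Warehouse) (j : Fin W.n) (i : Fin (W.picks j + 1)) :
    W.vconfFun j VCName.top i = if i.val < W.picks j then 2 else 0 := rfl

lemma vconf_bottom (W : Warehouse) (j : Fin W.n) (i : Fin (W.picks j + 1)) :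
    W.vconfFun j VCName.bottom i = if 1 ≤ i.val then 2 else 0 := rfl

lemma vconf_gap (W : Warehouse) (j : Fin W.n) (i : Fin (W.picks j + 1)) :
    W.vconfFun j VCName.gap i = if i = W.gapIdx j then 0 else 2 := rfl

lemma myVcEven (W : Warehouse) (j : Fin W.n) (c : VCName) (hc : c ≠ VCName.onepass)
    (e : W.E) : Even (W.vcSub j c e) := by
  match e with
  | .inl ⟨j', x⟩ =>
    show Even (if h : j' = j then W.vconfFun j c ⟨x.val, h ▸ x.isLt⟩ else 0)
    by_cases h : j' = j
    · rw [dif_pos h]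
      cases c with
      | onepass => exact absurd rfl hc
      | top => rw [vconf_top]; split <;> decide
      | bottom => rw [vconf_bottom]; split <;> decide
      | gap => rw [vconf_gap]; split <;> decide
      | twopass => exact ⟨1, rfl⟩
      | none => exact ⟨0, rfl⟩
    · rw [dif_neg h]; simp
  | .inr _ => simp [Warehouse.vcSub]

lemma myDegOnepass (W : Warehouse) (j : Fin W.n) :
    W.deg (W.vcSub j VCName.onepass) (W.aV j) = 1 := by
  unfold Warehouse.deg
  refine (Finset.sum_eq_single (Sum.inl ⟨j, 0⟩ : W.E) ?_ ?_).trans ?_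
  rotate_left 2
  · show W.vcSub j VCName.onepass (.inl ⟨j, 0⟩) *
      ((if (W.ends (.inl ⟨j, 0⟩)).1 = W.aV j then 1 else 0)
        + (if (W.ends (.inl ⟨j, 0⟩)).2 = W.aV j then 1 else 0)) = 1
    have h1 : W.vcSub j VCName.onepass (.inl ⟨j, 0⟩) = 1 := by
      show (if h : j = j then W.vconfFun j VCName.onepass ⟨(0 : Fin _).val, h ▸ (0 : Fin _).isLt⟩ else 0) = 1
      rw [dif_pos rfl]; rfl
    have h2 : (W.ends (.inl ⟨j, 0⟩)).1 = W.aV j := by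
      show (⟨j, Fin.castSucc 0⟩ : W.V) = ⟨j, 0⟩
      rfl
    have h3 : (W.ends (.inl ⟨j, 0⟩)).2 ≠ W.aV j := by
      show (⟨j, Fin.succ 0⟩ : W.V) ≠ ⟨j, 0⟩
      intro hcon
      have := congrArg (fun v : W.V => v.2.val) hcon
      simp at this
    rw [h1, h2, if_pos rfl, if_neg h3]
  · intro e _ hne
    match e with
    | .inl ⟨j', x⟩ =>
      by_cases h : j' = j
      · subst h
        have hx : x ≠ 0 := by rintro rfl; exact hne rfl
        have h2 : (W.ends (.inl ⟨j', x⟩)).1 ≠ W.aV j' := by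
          show (⟨j', Fin.castSucc x⟩ : W.V) ≠ ⟨j', 0⟩
          intro hcon
          apply hx
          have := congrArg (fun v : W.V => v.2.val) hcon
          simp only [Fin.coe_castSucc] at this
          exact Fin.ext this
        have h3 : (W.ends (.inl ⟨j', x⟩)).2 ≠ W.aV j' := by
          show (⟨j', Fin.succ x⟩ : W.V) ≠ ⟨j', 0⟩
          intro hcon
          have := congrArg (fun v : W.V => v.2.val) hcon
          simp at this
        simp [h2, h3]
      · have h0 : W.vcSub j VCName.onepass (.inl ⟨j', x⟩) = 0 := by
          show (if h : j' = j then _ else 0) = 0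
          rw [dif_neg h]
        rw [h0]; ring
    | .inr y =>
      have h0 : W.vcSub j VCName.onepass (.inr y) = 0 := rfl
      rw [h0]; ring
  · intro hmem; exact absurd (Finset.mem_univ _) hmem

end Aux

/-- Corollary 2: if the degrees of `a_j` and `b_j` in `S_{j+1}` are odd
then `1pass` is the only vertical configuration in aisle `j` that can be valid; if both
are even then `1pass` is not valid. -/
theorem stmt6 (W : Warehouse) (j : Fin W.n) (hj : j.val + 1 < W.n)
    (T : W.E → ℕ) (hT : W.IsPTS (W.edgesUpTo j.val j.val) T)
    (h : HCName)
    (S : W.E → ℕ) (hS : S = fun e => T e + W.hcSub ⟨j.val, by omega⟩ h e) :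
    ((Odd (W.deg S (W.aV j)) ∧ Odd (W.deg S (W.bV j))) →
      ∀ c : VCName, c ≠ VCName.onepass →
        ¬ W.IsPTS (W.edgesUpTo (j.val + 1) (j.val + 1)) (fun e => S e + W.vcSub j c e)) ∧
    ((Even (W.deg S (W.aV j)) ∧ Even (W.deg S (W.bV j))) →
      ¬ W.IsPTS (W.edgesUpTo (j.val + 1) (j.val + 1))
          (fun e => S e + W.vcSub j VCName.onepass e)) := by
  constructor
  · rintro ⟨hoddA, -⟩ c hc hPTS
    have heven := myPtsEven W j _ hPTS
    rw [myDegAdd] at heven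
    have hvce := myDegEvenOfEven W _ (myVcEven W j c hc) (W.aV j)
    rw [Nat.even_add] at heven
    rw [Nat.even_iff] at hvce
    rw [Nat.odd_iff] at hoddA
    rw [Nat.even_iff, Nat.even_iff] at heven
    omega
  · rintro ⟨hevenA, -⟩ hPTS
    have heven := myPtsEven W j _ hPTS
    rw [myDegAdd, myDegOnepass] at heven
    rw [Nat.even_iff] at heven hevenA
    omega
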